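/- Let N_D and N_K denote the eigenvalue counting functions of the Dirichlet and Krein Laplacians on balls B_n(0;R) ⊂ ℝⁿ. Then for all λ ∈ ℝ and n ≥ 3: N_K^{(n-1)}(λ) ≤ N_D^{(n)}(λ) − N_K^{(n)}(λ) ≤ N_D^{(n-1)}(λ), where superscript (m) refers to the ball B_m(0;R) ⊂ ℝ^m. This follows from the dimension recursion d_{n,ℓ} = d_{n−1,ℓ} + d_{n,ℓ−1} for the multiplicities of spherical harmonics and the representations N_D^{(n)}(λ) = ∑_{ℓ≥0} d_{n,ℓ} 𝒩_{(n/2)−1+ℓ}(λ), N_K^{(n)}(λ) = ∑_{ℓ≥0} d_{n,ℓ} 𝒩_{(n/2)+ℓ}(λ), together with the monotonicity of Bessel zeros j_{ν,k} in ν. -/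
import Mathlib


open Filter

/-- from the proof of Proposition 11.1: Let `R > 0`, `n ≥ 3`. Let
`j ν k` denote the `k`-th positive zero of the Bessel function `J_ν` (positive, tending
to `∞` in `k`, and monotone nondecreasing in `ν ≥ 0`), and for `ν ≥ 0` let
`𝒩_ν(λ) = #{k ≥ 1 | j_{ν,k}² R⁻² ≤ λ}`. Let `d m ℓ` be the dimension of the space of
spherical harmonics of degree `ℓ` on `S^{m−1}`, satisfying the recursion
`d_{m,ℓ} = d_{m−1,ℓ} + d_{m,ℓ−1}` (with `d_{m,−1} = 0`). Let `N_D^{(m)}` and `N_K^{(m)}`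
be the eigenvalue counting functions of the Dirichlet and Krein Laplacians on the ball
`B_m(0;R) ⊂ ℝᵐ`, given by the representations
`N_D^{(m)}(λ) = ∑_{ℓ≥0} d_{m,ℓ} 𝒩_{(m/2)−1+ℓ}(λ)` and
`N_K^{(m)}(λ) = ∑_{ℓ≥0} d_{m,ℓ} 𝒩_{(m/2)+ℓ}(λ)` (all four relevant series summable).
Then for all `λ ∈ ℝ`:
`N_K^{(n−1)}(λ) ≤ N_D^{(n)}(λ) − N_K^{(n)}(λ) ≤ N_D^{(n−1)}(λ)`. -/
theorem stmt_19 (R : ℝ) (hR : 0 < R) (n : ℕ) (hn : 3 ≤ n)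
    (j : ℝ → ℕ → ℝ)
    (hjpos : ∀ (ν : ℝ) (k : ℕ), 0 ≤ ν → 1 ≤ k → 0 < j ν k)
    (hjtop : ∀ ν : ℝ, 0 ≤ ν → Tendsto (j ν) atTop atTop)
    -- monotonicity of the Bessel zeros `j_{ν,k}` in the order `ν ≥ 0`:
    (hjmono : ∀ (k : ℕ) (ν ν' : ℝ), 0 ≤ ν → ν ≤ ν' → j ν k ≤ j ν' k)
    (NN : ℝ → ℝ → ℕ)
    (hNN : ∀ (ν lam : ℝ), 0 ≤ ν →
      (NN ν lam : ℕ) = Nat.card {k : ℕ | 1 ≤ k ∧ (j ν k) ^ 2 / R ^ 2 ≤ lam})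
    (d : ℕ → ℕ → ℕ)
    -- recursion `d_{m,ℓ} = d_{m−1,ℓ} + d_{m,ℓ−1}`, `d_{m,−1} = 0`:
    (hd0 : ∀ m : ℕ, 3 ≤ m → d m 0 = d (m - 1) 0)
    (hdrec : ∀ (m : ℕ), 3 ≤ m → ∀ ℓ : ℕ, d m (ℓ + 1) = d (m - 1) (ℓ + 1) + d m ℓ)
    (N_D N_K : ℕ → ℝ → ℝ)
    (hsumD : ∀ (m : ℕ) (lam : ℝ), 2 ≤ m →
      Summable (fun ℓ : ℕ => (d m ℓ : ℝ) * (NN ((m : ℝ) / 2 - 1 + ℓ) lam : ℝ)))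
    (hsumK : ∀ (m : ℕ) (lam : ℝ), 2 ≤ m →
      Summable (fun ℓ : ℕ => (d m ℓ : ℝ) * (NN ((m : ℝ) / 2 + ℓ) lam : ℝ)))
    (hND : ∀ (m : ℕ) (lam : ℝ), 2 ≤ m →
      N_D m lam = ∑' ℓ : ℕ, (d m ℓ : ℝ) * (NN ((m : ℝ) / 2 - 1 + ℓ) lam : ℝ))
    (hNK : ∀ (m : ℕ) (lam : ℝ), 2 ≤ m →
      N_K m lam = ∑' ℓ : ℕ, (d m ℓ : ℝ) * (NN ((m : ℝ) / 2 + ℓ) lam : ℝ)) :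
    ∀ lam : ℝ,
      N_K (n - 1) lam ≤ N_D n lam - N_K n lam ∧
        N_D n lam - N_K n lam ≤ N_D (n - 1) lam := by

  intro lam
  have hn1 : (2:ℕ) ≤ n - 1 := by omega
  have hn2 : (2:ℕ) ≤ n := by omega
  have hn3 : (3:ℝ) ≤ (n:ℝ) := by exact_mod_cast hn
  have hcast : ((n - 1 : ℕ) : ℝ) = (n : ℝ) - 1 := by
    have h1 : (1:ℕ) ≤ n := by omega
    push_cast [h1]
    ring
  -- finiteness of the counting sets
  have hfin : ∀ ν : ℝ, 0 ≤ ν → {k : ℕ | 1 ≤ k ∧ (j ν k) ^ 2 / R ^ 2 ≤ lam}.Finite := by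
    intro ν hν
    set s : ℝ := Real.sqrt (max lam 0) with hs
    have hs0 : 0 ≤ s := Real.sqrt_nonneg _
    have hs2 : s ^ 2 = max lam 0 := Real.sq_sqrt (le_max_right _ _)
    set C : ℝ := R * (s + 1) with hC
    have hC0 : 0 ≤ C := by positivity
    have hlamC : lam < C ^ 2 / R ^ 2 := by
      have h1 : C ^ 2 / R ^ 2 = (s + 1) ^ 2 := by
        field_simp [hC]
        ring
      rw [h1]
      nlinarith [le_max_left lam 0]
    obtain ⟨K, hK⟩ := Filter.eventually_atTop.mp ((hjtop ν hν).eventually_ge_atTop C)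
    apply Set.Finite.subset (Set.finite_Iio K)
    rintro k ⟨hk1, hk2⟩
    by_contra hk
    have hkK : K ≤ k := by simpa [Set.mem_Iio] using hk
    have h3 : C ≤ j ν k := hK k hkK
    have h4 : C ^ 2 ≤ (j ν k) ^ 2 := by nlinarith
    have h5 : C ^ 2 / R ^ 2 ≤ (j ν k) ^ 2 / R ^ 2 := by
      apply div_le_div_of_nonneg_right h4
      positivity
    linarith
  -- antitonicity of NN in ν
  have hanti : ∀ ν ν' : ℝ, 0 ≤ ν → ν ≤ ν' → NN ν' lam ≤ NN ν lam := by
    intro ν ν' hν hle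
    have hν' : 0 ≤ ν' := hν.trans hle
    rw [hNN ν lam hν, hNN ν' lam hν']
    apply Nat.card_mono (hfin ν hν)
    rintro k ⟨hk1, hk2⟩
    refine ⟨hk1, ?_⟩
    have hjk : 0 < j ν k := hjpos ν k hν hk1
    have hmono : j ν k ≤ j ν' k := hjmono k ν ν' hν hle
    have h4 : (j ν k) ^ 2 ≤ (j ν' k) ^ 2 := by nlinarith
    have h5 : (j ν k) ^ 2 / R ^ 2 ≤ (j ν' k) ^ 2 / R ^ 2 := by
      apply div_le_div_of_nonneg_right h4
      positivity
    linarith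
  -- the three series
  set f : ℕ → ℝ := fun ℓ => (d n ℓ : ℝ) * (NN ((n : ℝ) / 2 - 1 + ℓ) lam : ℝ) with hfdef
  set g : ℕ → ℝ := fun ℓ => (d (n - 1) ℓ : ℝ) * (NN ((n : ℝ) / 2 - 1 + ℓ) lam : ℝ) with hgdef
  set h : ℕ → ℝ := fun ℓ => (d n ℓ : ℝ) * (NN ((n : ℝ) / 2 + ℓ) lam : ℝ) with hhdef
  have hf : Summable f := hsumD n lam hn2
  have hh : Summable h := hsumK n lam hn2
  -- auxiliary nonnegativity / order facts for the ν-arguments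
  have harg0 : ∀ ℓ : ℕ, (0:ℝ) ≤ ((n - 1 : ℕ) : ℝ) / 2 - 1 + ℓ := by
    intro ℓ
    rw [hcast]
    have : (0:ℝ) ≤ (ℓ : ℝ) := Nat.cast_nonneg ℓ
    linarith
  have harg1 : ∀ ℓ : ℕ, (0:ℝ) ≤ (n : ℝ) / 2 - 1 + ℓ := by
    intro ℓ
    have : (0:ℝ) ≤ (ℓ : ℝ) := Nat.cast_nonneg ℓ
    linarith
  have hle1 : ∀ ℓ : ℕ, ((n - 1 : ℕ) : ℝ) / 2 - 1 + ℓ ≤ (n : ℝ) / 2 - 1 + ℓ := by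
    intro ℓ
    rw [hcast]
    linarith
  have hle2 : ∀ ℓ : ℕ, (n : ℝ) / 2 - 1 + ℓ ≤ ((n - 1 : ℕ) : ℝ) / 2 + ℓ := by
    intro ℓ
    rw [hcast]
    linarith
  -- summability of g by comparison with the Dirichlet series in dimension n-1
  have hg : Summable g := by
    apply Summable.of_nonneg_of_le (fun ℓ => by positivity)
      (fun ℓ => ?_) (hsumD (n - 1) lam hn1)
    apply mul_le_mul_of_nonneg_left _ (Nat.cast_nonneg _)
    exact_mod_cast hanti _ _ (harg0 ℓ) (hle1 ℓ)
  have hgshift : Summable (fun ℓ : ℕ => g (ℓ + 1)) := (summable_nat_add_iff 1).mpr hg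
  -- the telescoping identity: ∑ f = ∑ g + ∑ h
  have e1 : ∀ ℓ : ℕ, f (ℓ + 1) = g (ℓ + 1) + h ℓ := by
    intro ℓ
    have hA1 : NN ((n : ℝ) / 2 - 1 + (ℓ + 1 : ℕ)) lam = NN ((n : ℝ) / 2 + ℓ) lam := by
      congr 1
      push_cast
      ring
    have hr := hdrec n hn ℓ
    simp only [hfdef, hgdef, hhdef, hA1, hr]
    push_cast
    ring
  have key : ∑' ℓ, f ℓ = (∑' ℓ, g ℓ) + ∑' ℓ, h ℓ := by
    have t1 : ∑' ℓ, f ℓ = f 0 + ∑' ℓ, f (ℓ + 1) := Summable.tsum_eq_zero_add hf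
    have t2 : ∑' ℓ, g ℓ = g 0 + ∑' ℓ, g (ℓ + 1) := Summable.tsum_eq_zero_add hg
    have t3 : ∑' ℓ, f (ℓ + 1) = (∑' ℓ, g (ℓ + 1)) + ∑' ℓ, h ℓ := by
      rw [tsum_congr e1]
      exact Summable.tsum_add hgshift hh
    have t4 : f 0 = g 0 := by
      simp only [hfdef, hgdef, hd0 n hn]
    rw [t1, t3, t2, t4]
    ring
  have hmid : N_D n lam - N_K n lam = ∑' ℓ, g ℓ := by
    rw [hND n lam hn2, hNK n lam hn2]
    have : (∑' ℓ, f ℓ) - ∑' ℓ, h ℓ = ∑' ℓ, g ℓ := by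
      rw [key]; ring
    exact this
  constructor
  · rw [hmid, hNK (n - 1) lam hn1]
    apply Summable.tsum_le_tsum _ (hsumK (n - 1) lam hn1) hg
    intro ℓ
    apply mul_le_mul_of_nonneg_left _ (Nat.cast_nonneg _)
    exact_mod_cast hanti _ _ (harg1 ℓ) (hle2 ℓ)
  · rw [hmid, hND (n - 1) lam hn1]
    apply Summable.tsum_le_tsum _ hg (hsumD (n - 1) lam hn1)
    intro ℓ
    apply mul_le_mul_of_nonneg_left _ (Nat.cast_nonneg _)
    exact_mod_cast hanti _ _ (harg0 ℓ) (hle1 ℓ)
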